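/- Let (A_m)_{m∈ℕ} be a sequence of essential partitions of M̄ and let F : M̄ × M̄ → ℝ be a bounded measurable function such that ∑_{A,B ∈ A_m} μ̄(A)·μ̄(B)·( sup_{A×B} F − inf_{A×B} F ) → 0 as m → ∞. Then for μ̄-almost every x ∈ M̄, (1/n²)·∑_{0 ≤ i,j ≤ n−1} F(T̄^i x, T̄^j x) converges, as n → ∞, to ∫_{M̄×M̄} F(x,y) dμ̄(x) dμ̄(y). -/

import Mathlib

open MeasureTheory Filter Set

section LimsupHelpers

/-- trivial boundedness helper -/
lemma bddu {u : ℕ → ℝ} {C : ℝ} (h : ∀ n, |u n| ≤ C) :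
    IsBoundedUnder (· ≤ ·) atTop u :=
  isBoundedUnder_of ⟨C, fun n => (abs_le.1 (h n)).2⟩

lemma bddl {u : ℕ → ℝ} {C : ℝ} (h : ∀ n, |u n| ≤ C) :
    IsBoundedUnder (· ≥ ·) atTop u :=
  isBoundedUnder_of ⟨-C, fun n => (abs_le.1 (h n)).1⟩

lemma limsup_le_limsup_of_sub_tendsto_zero {u v : ℕ → ℝ} {C : ℝ}
    (hu : ∀ n, |u n| ≤ C) (hv : ∀ n, |v n| ≤ C)
    (h : Filter.Tendsto (fun n => u n - v n) atTop (nhds 0)) :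
    limsup u atTop ≤ limsup v atTop := by
  refine le_of_forall_pos_le_add fun ε hε => ?_
  have h1 : ∀ᶠ n in atTop, u n ≤ v n + ε / 2 := by
    filter_upwards [h.eventually_lt_const (show (0:ℝ) < ε/2 by positivity)] with n hn
    linarith
  have h2 : ∀ᶠ n in atTop, v n < limsup v atTop + ε / 2 :=
    Filter.eventually_lt_of_limsup_lt (by linarith [lt_add_of_pos_right (limsup v atTop) (show (0:ℝ) < ε/2 by positivity)]) (bddu hv)
  have h3 : ∀ᶠ n in atTop, u n ≤ limsup v atTop + ε := by
    filter_upwards [h1, h2] with n hn1 hn2; linarith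
  exact Filter.limsup_le_of_le ((bddl hu).isCoboundedUnder_le) h3

lemma limsup_eq_limsup_of_sub_tendsto_zero {u v : ℕ → ℝ} {C : ℝ}
    (hu : ∀ n, |u n| ≤ C) (hv : ∀ n, |v n| ≤ C)
    (h : Filter.Tendsto (fun n => u n - v n) atTop (nhds 0)) :
    limsup u atTop = limsup v atTop := by
  refine le_antisymm (limsup_le_limsup_of_sub_tendsto_zero hu hv h) ?_
  exact limsup_le_limsup_of_sub_tendsto_zero hv hu (by simpa using h.neg)

lemma real_limsup_neg {u : ℕ → ℝ} {C : ℝ} (hu : ∀ n, |u n| ≤ C) :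
    limsup (fun n => -u n) atTop = -liminf u atTop := by
  have := (Antitone.map_liminf_of_continuousAt (F := atTop) (f := fun x : ℝ => -x)
    (fun a b hab => by simpa using hab) u (by fun_prop)
    ((bddu hu).isCoboundedUnder_flip) (bddl hu))
  simpa [Function.comp_def] using this.symm

end LimsupHelpers

section Maximal

variable {Ω : Type*} [MeasurableSpace Ω] (T : Ω → Ω) (f : Ω → ℝ)

/-- `maxS T f N x = max (0, S₁ x, ..., S_N x)` where `S_n` are Birkhoff sums. -/
noncomputable def maxS : ℕ → Ω → ℝ
  | 0 => fun _ => 0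
  | (N+1) => fun x => max (maxS N x) (birkhoffSum T f (N+1) x)

omit [MeasurableSpace Ω] in
lemma maxS_nonneg : ∀ N x, 0 ≤ maxS T f N x
  | 0, _ => le_refl _
  | (N+1), x => le_trans (maxS_nonneg N x) (le_max_left _ _)

omit [MeasurableSpace Ω] in
lemma maxS_mono (x : Ω) : Monotone fun N => maxS T f N x :=
  monotone_nat_of_le_succ fun _ => le_max_left _ _

omit [MeasurableSpace Ω] in
lemma birkhoffSum_le_maxS {n N : ℕ} (hn : n ≤ N) (hn0 : 1 ≤ n) (x : Ω) :
    birkhoffSum T f n x ≤ maxS T f N x := by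
  induction N with
  | zero => omega
  | succ N ih =>
    rcases Nat.lt_or_ge n (N+1) with h | h
    · exact le_trans (ih (by omega)) (le_max_left _ _)
    · have : n = N + 1 := by omega
      subst this; exact le_max_right _ _

lemma measurable_maxS (hT : Measurable T) (hf : Measurable f) (N : ℕ) :
    Measurable (maxS T f N) := by
  induction N with
  | zero => exact measurable_const
  | succ N ih =>
    refine ih.max ?_
    unfold birkhoffSum
    exact Finset.measurable_sum _ fun k _ => hf.comp (hT.iterate k)

omit [MeasurableSpace Ω] in
lemma maxS_le (C : ℝ) (hC : 0 ≤ C) (hf : ∀ x, |f x| ≤ C) : ∀ N x, maxS T f N x ≤ N * C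
  | 0, x => by simp [maxS, hC]
  | (N+1), x => by
    refine max_le (le_trans (maxS_le C hC hf N x) ?_) ?_
    · push_cast; nlinarith
    · calc birkhoffSum T f (N+1) x ≤ ∑ k ∈ Finset.range (N+1), C :=
            Finset.sum_le_sum fun k _ => (abs_le.1 (hf _)).2
        _ = (N+1) * C := by simp [mul_comm]
        _ ≤ _ := le_of_eq (by push_cast; ring)

omit [MeasurableSpace Ω] in
lemma maxS_exists : ∀ N (x : Ω), 0 < maxS T f N x →
    ∃ n, 1 ≤ n ∧ n ≤ N ∧ maxS T f N x = birkhoffSum T f n x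
  | 0, x, hx => absurd hx (lt_irrefl 0)
  | (N+1), x, hx => by
    rcases max_cases (maxS T f N x) (birkhoffSum T f (N+1) x) with ⟨h1, h2⟩ | ⟨h1, h2⟩
    · have hx' : 0 < maxS T f N x := by
        rw [show maxS T f (N+1) x = max (maxS T f N x) (birkhoffSum T f (N+1) x) from rfl, h1] at hx
        exact hx
      obtain ⟨n, a, b, c⟩ := maxS_exists N x hx'
      exact ⟨n, a, by omega, by rw [show maxS T f (N+1) x = max _ _ from rfl, h1]; exact c⟩
    · exact ⟨N+1, by omega, le_refl _, h1⟩

omit [MeasurableSpace Ω] in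
/-- key pointwise inequality on the set where the maximum is positive -/
lemma maxS_key (N : ℕ) (x : Ω) (hx : 0 < maxS T f N x) :
    maxS T f N x - maxS T f N (T x) ≤ f x := by
  obtain ⟨n, hn1, hnN, hEq⟩ := maxS_exists T f N x hx
  have h2 : birkhoffSum T f n x = f x + birkhoffSum T f (n-1) (T x) := by
    have := birkhoffSum_succ' T f (n-1) x
    rwa [Nat.sub_add_cancel hn1] at this
  have hle : birkhoffSum T f (n-1) (T x) ≤ maxS T f N (T x) := by
    rcases Nat.eq_zero_or_pos (n-1) with h | h
    · rw [h]; simpa [birkhoffSum] using maxS_nonneg T f N (T x)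
    · exact birkhoffSum_le_maxS T f (by omega) h (T x)
  rw [hEq, h2]
  linarith

/-- Maximal ergodic theorem (Garsia's proof), bounded version. -/
lemma maximal_ergodic {μ : Measure Ω} [IsProbabilityMeasure μ]
    (hT : MeasurePreserving T μ μ) (hf : Measurable f)
    (C : ℝ) (hC : ∀ x, |f x| ≤ C) (N : ℕ) :
    0 ≤ ∫ x in {x | 0 < maxS T f N x}, f x ∂μ := by
  have : Nonempty Ω := Measure.nonempty_of_neZero μ
  have hC0 : 0 ≤ C := le_trans (abs_nonneg _) (hC (Classical.arbitrary _))
  set E : Set Ω := {x | 0 < maxS T f N x} with hE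
  have hMm : Measurable (maxS T f N) := measurable_maxS T f hT.measurable hf N
  have hEm : MeasurableSet E := measurableSet_lt measurable_const hMm
  -- integrability facts
  have hfi : Integrable f μ :=
    (integrable_const C).mono' hf.aestronglyMeasurable
      (Filter.Eventually.of_forall fun x => by simpa using hC x)
  have hMb : ∀ x, ‖maxS T f N x‖ ≤ N * C := fun x => by
    rw [Real.norm_eq_abs, abs_of_nonneg (maxS_nonneg T f N x)]
    exact maxS_le T f C hC0 hC N x
  have hMi : Integrable (maxS T f N) μ :=
    (integrable_const ((N : ℝ) * C)).mono' hMm.aestronglyMeasurable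
      (Filter.Eventually.of_forall hMb)
  have hMTi : Integrable (fun x => maxS T f N (T x)) μ :=
    (integrable_const ((N : ℝ) * C)).mono' (hMm.comp hT.measurable).aestronglyMeasurable
      (Filter.Eventually.of_forall fun x => hMb (T x))
  -- ∫_E f ≥ ∫_E (maxS - maxS ∘ T)
  have step1 : ∫ x in E, (maxS T f N x - maxS T f N (T x)) ∂μ ≤ ∫ x in E, f x ∂μ := by
    refine setIntegral_mono_on ((hMi.sub hMTi).integrableOn) (hfi.integrableOn) hEm ?_
    intro x hx
    exact maxS_key T f N x hx
  -- ∫_E maxS = ∫ maxS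
  have step2 : ∫ x in E, maxS T f N x ∂μ = ∫ x, maxS T f N x ∂μ := by
    rw [← integral_add_compl hEm hMi]
    have : ∫ x in Eᶜ, maxS T f N x ∂μ = 0 := by
      refine setIntegral_eq_zero_of_forall_eq_zero fun x hx => ?_
      have : ¬ 0 < maxS T f N x := hx
      linarith [maxS_nonneg T f N x, this]
    · rw [this, add_zero]
  have step2' : ∀ x ∈ Eᶜ, maxS T f N x = 0 := fun x hx => by
    have : ¬ 0 < maxS T f N x := hx
    linarith [maxS_nonneg T f N x]
  -- ∫_E maxS∘T ≤ ∫ maxS∘T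
  have step3 : ∫ x in E, maxS T f N (T x) ∂μ ≤ ∫ x, maxS T f N (T x) ∂μ :=
    setIntegral_le_integral hMTi (Filter.Eventually.of_forall fun x => maxS_nonneg T f N (T x))
  -- ∫ maxS∘T = ∫ maxS
  have step4 : ∫ x, maxS T f N (T x) ∂μ = ∫ x, maxS T f N x ∂μ := by
    rw [← integral_map hT.measurable.aemeasurable hMm.aestronglyMeasurable, hT.map_eq]
  calc (0:ℝ) = ∫ x, maxS T f N x ∂μ - ∫ x, maxS T f N x ∂μ := by ring
    _ ≤ ∫ x in E, maxS T f N x ∂μ - ∫ x in E, maxS T f N (T x) ∂μ := by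
        rw [step2]; linarith [step3, step4]
    _ = ∫ x in E, (maxS T f N x - maxS T f N (T x)) ∂μ := by
        rw [integral_sub hMi.integrableOn hMTi.integrableOn]
    _ ≤ ∫ x in E, f x ∂μ := step1

end Maximal
section Birkhoff

variable {Ω : Type*} [MeasurableSpace Ω] {μ : Measure Ω} [IsProbabilityMeasure μ] {T : Ω → Ω}

/-- average -/
noncomputable def bavg (T : Ω → Ω) (f : Ω → ℝ) (n : ℕ) (x : Ω) : ℝ :=
  (n : ℝ)⁻¹ * birkhoffSum T f n x

omit [MeasurableSpace Ω] in
lemma abs_birkhoffSum_le {f : Ω → ℝ} {C : ℝ} (hC : ∀ x, |f x| ≤ C) (n : ℕ) (x : Ω) :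
    |birkhoffSum T f n x| ≤ n * C := by
  calc |birkhoffSum T f n x| ≤ ∑ k ∈ Finset.range n, |f (T^[k] x)| :=
        Finset.abs_sum_le_sum_abs _ _
    _ ≤ ∑ k ∈ Finset.range n, C := Finset.sum_le_sum fun k _ => hC _
    _ = n * C := by simp [mul_comm]

omit [MeasurableSpace Ω] in
lemma abs_bavg_le {f : Ω → ℝ} {C : ℝ} (hC0 : 0 ≤ C) (hC : ∀ x, |f x| ≤ C) (n : ℕ) (x : Ω) :
    |bavg T f n x| ≤ C := by
  rcases Nat.eq_zero_or_pos n with rfl | hn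
  · simp [bavg, hC0]
  · have h1 : |bavg T f n x| = (n:ℝ)⁻¹ * |birkhoffSum T f n x| := by
      rw [bavg, abs_mul, abs_of_nonneg (by positivity)]
    rw [h1]
    have hn' : (0:ℝ) < n := by exact_mod_cast hn
    calc (n:ℝ)⁻¹ * |birkhoffSum T f n x| ≤ (n:ℝ)⁻¹ * (n * C) := by
          exact mul_le_mul_of_nonneg_left (abs_birkhoffSum_le hC n x) (by positivity)
      _ = C := by field_simp
end Birkhoff

section Birkhoff2

variable {Ω : Type*} [MeasurableSpace Ω] {μ : Measure Ω} [IsProbabilityMeasure μ] {T : Ω → Ω}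

omit [MeasurableSpace Ω] in
lemma bavg_invariance {f : Ω → ℝ} {C : ℝ} (hC0 : 0 ≤ C) (hC : ∀ x, |f x| ≤ C) (x : Ω) :
    limsup (fun n => bavg T f n (T x)) atTop = limsup (fun n => bavg T f n x) atTop := by
  have key : limsup (fun n => bavg T f (n+1) x) atTop = limsup (fun n => bavg T f n x) atTop :=
    limsup_nat_add (fun n => bavg T f n x) 1
  rw [← key]
  refine limsup_eq_limsup_of_sub_tendsto_zero (C := C)
    (fun n => abs_bavg_le hC0 hC n (T x)) (fun n => abs_bavg_le hC0 hC (n+1) x) ?_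
  -- |bavg n (T x) - bavg (n+1) x| ≤ (C + |f x|)/(n+1)
  have hb : ∀ n : ℕ, |bavg T f n (T x) - bavg T f (n+1) x| ≤ (C + |f x|) / (n+1) := by
    intro n
    rcases Nat.eq_zero_or_pos n with rfl | hn
    · have h1 : bavg T f 0 (T x) = 0 := by simp [bavg]
      have h2 : bavg T f 1 x = f x := by simp [bavg, birkhoffSum_one]
      rw [h1, h2, zero_sub, abs_neg]
      have : ((0:ℕ):ℝ) + 1 = 1 := by norm_num
      rw [this, div_one]
      linarith [abs_nonneg (f x)]
    · have hn' : (0:ℝ) < n := by exact_mod_cast hn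
      have hsucc : birkhoffSum T f (n+1) x = f x + birkhoffSum T f n (T x) :=
        birkhoffSum_succ' T f n x
      set s := birkhoffSum T f n (T x) with hs
      have hsb : |s| ≤ n * C := abs_birkhoffSum_le hC n (T x)
      have heq : bavg T f n (T x) - bavg T f (n+1) x
          = s / (n * (n+1)) - f x / (n+1) := by
        rw [bavg, bavg, hsucc, ← hs]
        push_cast
        field_simp
        ring
      rw [heq]
      have h1 : |s / (n * (n+1)) - f x / (n+1)| ≤ |s| / (n * (n+1)) + |f x| / (n+1) := by
        refine le_trans (abs_sub _ _) ?_
        rw [abs_div, abs_div]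
        gcongr
        · exact le_abs_self _
        · exact le_abs_self _
      refine le_trans h1 ?_
      have h2 : |s| / (↑n * (↑n + 1)) ≤ C / (n+1) := by
        rw [div_le_div_iff₀ (by positivity) (by positivity)]
        calc |s| * (↑n + 1) ≤ (n * C) * (n+1) := by
              have := abs_nonneg s
              nlinarith
          _ = C / 1 * (↑n * (↑n + 1)) := by ring
          _ = C * (↑n * (↑n + 1)) := by ring
      have : C / (↑n+1) + |f x| / (↑n+1) = (C + |f x|)/(↑n+1) := by ring
      linarith [h2]
  refine squeeze_zero_norm hb ?_
  have : Tendsto (fun n : ℕ => (C + |f x|) / (n+1)) atTop (nhds 0) := by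
    apply Tendsto.div_atTop (tendsto_const_nhds)
    exact tendsto_atTop_add_const_right _ 1 tendsto_natCast_atTop_atTop
  exact this

lemma measurable_bavg {f : Ω → ℝ} (hT : Measurable T) (hf : Measurable f) (n : ℕ) :
    Measurable (bavg T f n) := by
  apply Measurable.const_mul
  unfold birkhoffSum
  exact Finset.measurable_sum _ fun k _ => hf.comp (hT.iterate k)

/-- half of Birkhoff: the limsup of averages is a.e. a constant `≤ ∫ f`. -/
lemma birkhoff_limsup_le (hT : Ergodic T μ) (f : Ω → ℝ) (hf : Measurable f)
    (C : ℝ) (hC : ∀ x, |f x| ≤ C) :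
    ∃ c : ℝ, (∀ᵐ x ∂μ, limsup (fun n => bavg T f n x) atTop = c) ∧ c ≤ ∫ x, f x ∂μ := by
  have hne : Nonempty Ω := Measure.nonempty_of_neZero μ
  have hC0 : 0 ≤ C := le_trans (abs_nonneg _) (hC (Classical.arbitrary _))
  set L : Ω → ℝ := fun x => limsup (fun n => bavg T f n x) atTop with hL
  have hLm : Measurable L := Measurable.limsup fun n => measurable_bavg hT.measurable hf n
  have hLinv : L ∘ T = L := funext fun x => bavg_invariance hC0 hC x
  obtain ⟨c, hc⟩ := hT.toPreErgodic.ae_eq_const_of_ae_eq_comp hLm hLinv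
  refine ⟨c, hc, ?_⟩
  -- show c ≤ ∫ f
  refine le_of_forall_pos_le_add fun ε hε => ?_
  set g : Ω → ℝ := fun x => f x - (c - ε) with hg
  have hgm : Measurable g := hf.sub measurable_const
  have hgC : ∀ x, |g x| ≤ C + |c - ε| := fun x =>
    le_trans (abs_sub _ _) (by gcongr; exact hC x)
  have hgS : ∀ n x, birkhoffSum T g n x = birkhoffSum T f n x - n * (c - ε) := by
    intro n x
    unfold birkhoffSum
    rw [hg]
    rw [Finset.sum_sub_distrib, Finset.sum_const, Finset.card_range]
    simp [nsmul_eq_mul]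
  -- a.e. x lies in some E_N
  set E : ℕ → Set Ω := fun N => {x | 0 < maxS T g N x} with hE
  have hEm : ∀ N, MeasurableSet (E N) := fun N =>
    measurableSet_lt measurable_const (measurable_maxS T g hT.measurable hgm N)
  have hEmono : Monotone E := fun N M hNM x hx =>
    lt_of_lt_of_le hx (maxS_mono T g x hNM)
  have hcover : ∀ᵐ x ∂μ, x ∈ ⋃ N, E N := by
    filter_upwards [hc] with x hx
    have hlt : c - ε < limsup (fun n => bavg T f n x) atTop := by
      rw [show limsup (fun n => bavg T f n x) atTop = c from hx]; linarith
    have hfreq : ∃ᶠ n in atTop, c - ε < bavg T f n x :=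
      frequently_lt_of_lt_limsup ((bddl (fun n => abs_bavg_le hC0 hC n x)).isCoboundedUnder_le) hlt
    obtain ⟨n, hn1, hna⟩ := (frequently_atTop.1 hfreq) 1
    have hn0 : (0:ℝ) < n := by exact_mod_cast hn1
    have hpos : 0 < birkhoffSum T g n x := by
      rw [hgS]
      have : (n:ℝ) * (c - ε) < birkhoffSum T f n x := by
        have := hna
        rw [bavg] at this
        have h2 : (n:ℝ) * ((n:ℝ)⁻¹ * birkhoffSum T f n x) = birkhoffSum T f n x := by
          field_simp
        nlinarith [this]
      linarith
    exact Set.mem_iUnion.2 ⟨n, lt_of_lt_of_le hpos (birkhoffSum_le_maxS T g (le_refl n) hn1 x)⟩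
  have hgi : Integrable g μ :=
    (integrable_const (C + |c - ε|)).mono' hgm.aestronglyMeasurable
      (Filter.Eventually.of_forall fun x => by simpa using hgC x)
  have htend : Tendsto (fun N => ∫ x in E N, g x ∂μ) atTop (nhds (∫ x in ⋃ N, E N, g x ∂μ)) :=
    tendsto_setIntegral_of_monotone hEm hEmono hgi.integrableOn
  have hfull : μ.restrict (⋃ N, E N) = μ := Measure.restrict_eq_self_of_ae_mem hcover
  have hint : ∫ x in ⋃ N, E N, g x ∂μ = ∫ x, g x ∂μ := by rw [hfull]
  have hpos : 0 ≤ ∫ x, g x ∂μ := by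
    rw [← hint]
    refine ge_of_tendsto' htend fun N => ?_
    exact maximal_ergodic T g hT.toMeasurePreserving hgm (C + |c - ε|) hgC N
  have : ∫ x, g x ∂μ = (∫ x, f x ∂μ) - (c - ε) := by
    rw [hg]
    rw [integral_sub (
      (integrable_const C).mono' hf.aestronglyMeasurable
        (Filter.Eventually.of_forall fun x => by simpa using hC x)) (integrable_const _)]
    simp
  linarith [hpos, this.symm.le]

end Birkhoff2

section Birkhoff3

variable {Ω : Type*} [MeasurableSpace Ω] {μ : Measure Ω} [IsProbabilityMeasure μ] {T : Ω → Ω}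

/-- Birkhoff's pointwise ergodic theorem for bounded measurable functions. -/
theorem birkhoff_bdd (hT : Ergodic T μ) (f : Ω → ℝ) (hf : Measurable f)
    (C : ℝ) (hC : ∀ x, |f x| ≤ C) :
    ∀ᵐ x ∂μ, Tendsto (fun n => bavg T f n x) atTop (nhds (∫ x, f x ∂μ)) := by
  have hne : Nonempty Ω := Measure.nonempty_of_neZero μ
  have hC0 : 0 ≤ C := le_trans (abs_nonneg _) (hC (Classical.arbitrary _))
  obtain ⟨c, hc, hcle⟩ := birkhoff_limsup_le hT f hf C hC
  obtain ⟨c', hc', hc'le⟩ := birkhoff_limsup_le hT (fun x => -f x) (hf.neg) C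
    (fun x => by simpa using hC x)
  have hnegint : ∫ x, -f x ∂μ = -∫ x, f x ∂μ := integral_neg f
  have hnegavg : ∀ n x, bavg T (fun y => -f y) n x = -(bavg T f n x) := by
    intro n x
    unfold bavg birkhoffSum
    simp [Finset.sum_neg_distrib]
  filter_upwards [hc, hc'] with x hx hx'
  have hbdd := fun n => abs_bavg_le (T := T) hC0 hC n x
  have hlimsup : limsup (fun n => bavg T f n x) atTop = c := hx
  have hneg : limsup (fun n => -(bavg T f n x)) atTop = c' := by
    have : (fun n => bavg T (fun y => -f y) n x) = fun n => -(bavg T f n x) :=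
      funext fun n => hnegavg n x
    rw [← this]; exact hx'
  have hliminf : liminf (fun n => bavg T f n x) atTop = -c' := by
    have := real_limsup_neg (u := fun n => bavg T f n x) hbdd
    rw [hneg] at this
    linarith
  -- squeeze: -c' ≤ c (liminf ≤ limsup), c ≤ ∫f, -c' ≥ ∫f
  have h1 : -c' ≤ c := by
    rw [← hliminf, ← hlimsup]
    exact liminf_le_limsup (bddu hbdd) (bddl hbdd)
  have h2 : (∫ x, f x ∂μ) ≤ -c' := by
    rw [hnegint] at hc'le; linarith
  have hceq : c = ∫ x, f x ∂μ := le_antisymm hcle (by linarith)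
  have hc'eq : -c' = ∫ x, f x ∂μ := le_antisymm (by linarith) h2
  exact tendsto_of_liminf_eq_limsup (by rw [hliminf, hc'eq]) (by rw [hlimsup, hceq])
    (bddu hbdd) (bddl hbdd)

end Birkhoff3

section Scheffe
set_option maxHeartbeats 1000000

/-- L¹ convergence of finitely-supported probability vectors converging pointwise
to a summable probability vector (Scheffé), double-sum version. -/
lemma scheffe_pair {w : ℕ → ℕ → ℝ} {s : ℕ → Finset ℕ} {b : ℕ → ℝ} {d : ℕ → ℕ → ℝ} {D : ℝ}
    (hw0 : ∀ n p, 0 ≤ w n p) (hws : ∀ n p, p ∉ s n → w n p = 0)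
    (hw1 : ∀ᶠ n in atTop, ∑ p ∈ s n, w n p = 1)
    (hb0 : ∀ p, 0 ≤ b p) (hbs : Summable b) (hb1 : ∑' p, b p = 1)
    (hconv : ∀ p, Tendsto (fun n => w n p) atTop (nhds (b p)))
    (hd : ∀ p q, |d p q| ≤ D) :
    Tendsto (fun n => ∑ p ∈ s n, ∑ q ∈ s n, w n p * w n q * d p q) atTop
      (nhds (∑' pq : ℕ × ℕ, b pq.1 * b pq.2 * d pq.1 pq.2)) := by
  classical
  have hD : 0 ≤ D := le_trans (abs_nonneg _) (hd 0 0)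
  -- summability basics
  have hwsum : ∀ n, Summable (fun p => w n p) := fun n =>
    summable_of_ne_finset_zero (s := s n) (fun p hp => hws n p hp)
  have hwtsum : ∀ n, ∑' p, w n p = ∑ p ∈ s n, w n p := fun n =>
    tsum_eq_sum (fun p hp => hws n p hp)
  -- D_n := ∑' |w n p - b p| tendsto 0
  set Dn : ℕ → ℝ := fun n => ∑' p, |w n p - b p| with hDn
  have hsubsum : ∀ n, Summable (fun p => w n p - b p) := fun n => (hwsum n).sub hbs
  have habs_sum : ∀ n, Summable (fun p => |w n p - b p|) := fun n => (hsubsum n).abs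
  have hmax_sum : ∀ n, Summable (fun p => max (b p - w n p) 0) := by
    intro n
    exact Summable.of_nonneg_of_le (fun p => le_max_right _ _)
      (fun p => max_le (by linarith [hw0 n p]) (hb0 p)) hbs
  have hDn_eq : ∀ᶠ n in atTop, Dn n = 2 * ∑' p, max (b p - w n p) 0 := by
    filter_upwards [hw1] with n h1
    have key : ∀ p, |w n p - b p| = 2 * max (b p - w n p) 0 + (w n p - b p) := by
      intro p
      rcases le_or_gt (b p) (w n p) with h | h
      · rw [max_eq_right (by linarith), abs_of_nonneg (by linarith)]; ring
      · rw [max_eq_left (by linarith), abs_of_neg (by linarith)]; ring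
    calc Dn n = ∑' p, (2 * max (b p - w n p) 0 + (w n p - b p)) := by
          rw [hDn]; exact tsum_congr key
      _ = 2 * (∑' p, max (b p - w n p) 0) + ∑' p, (w n p - b p) := by
          rw [Summable.tsum_add ((hmax_sum n).mul_left 2) (hsubsum n)]
          rw [tsum_mul_left]
      _ = 2 * ∑' p, max (b p - w n p) 0 := by
          rw [Summable.tsum_sub (hwsum n) hbs, hwtsum n, h1, hb1, sub_self, add_zero]
  have hDn0 : Tendsto Dn atTop (nhds 0) := by
    have h2 : Tendsto (fun n => ∑' p, max (b p - w n p) 0) atTop (nhds 0) := by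
      have := tendsto_tsum_of_dominated_convergence (𝓕 := atTop)
        (f := fun n p => max (b p - w n p) 0) (g := fun _ => 0) (bound := b) hbs
        (fun p => by
          have h4 : Tendsto (fun n => b p - w n p) atTop (nhds 0) := by
            simpa using ((hconv p).const_sub (b p))
          have h3 : Tendsto (fun n => max (b p - w n p) 0) atTop (nhds (max 0 0)) :=
            Tendsto.max h4 tendsto_const_nhds
          simpa using h3)
        (Filter.Eventually.of_forall fun n p => by
          rw [Real.norm_eq_abs, abs_of_nonneg (le_max_right _ _)]
          exact max_le (by linarith [hw0 n p]) (hb0 p))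
      simpa using this
    have : Tendsto (fun n => 2 * ∑' p, max (b p - w n p) 0) atTop (nhds 0) := by
      simpa using h2.const_mul 2
    exact Tendsto.congr' (hDn_eq.mono fun n h => h.symm) this
  -- key inequality
  have hbb : Summable (fun pq : ℕ × ℕ => b pq.1 * b pq.2) := by
    apply summable_mul_of_summable_norm (f := b) (g := b) <;>
      · simpa [Real.norm_eq_abs] using hbs.abs
  have hbbd : Summable (fun pq : ℕ × ℕ => b pq.1 * b pq.2 * d pq.1 pq.2) := by
    refine Summable.of_abs (Summable.of_nonneg_of_le (fun pq => abs_nonneg _) (fun pq => ?_)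
      (hbb.mul_right D))
    rw [abs_mul]
    have h1 : |b pq.1 * b pq.2| = b pq.1 * b pq.2 := abs_of_nonneg (mul_nonneg (hb0 _) (hb0 _))
    rw [h1]
    exact mul_le_mul_of_nonneg_left (hd _ _) (mul_nonneg (hb0 _) (hb0 _))
  have keyineq : ∀ᶠ n in atTop,
      |(∑ p ∈ s n, ∑ q ∈ s n, w n p * w n q * d p q) -
        ∑' pq : ℕ × ℕ, b pq.1 * b pq.2 * d pq.1 pq.2| ≤ D * (2 * Dn n) := by
    filter_upwards [hw1] with n h1
    -- rewrite finite sum as tsum over pairs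
    have hwws : Summable (fun pq : ℕ × ℕ => w n pq.1 * w n pq.2 * d pq.1 pq.2) := by
      apply summable_of_ne_finset_zero (s := (s n) ×ˢ (s n))
      intro pq hpq
      by_cases hp : pq.1 ∈ s n
      · have hq : pq.2 ∉ s n := fun hq => hpq (Finset.mem_product.2 ⟨hp, hq⟩)
        rw [hws n _ hq]; ring
      · rw [hws n _ hp]; ring
    have hfin : ∑ p ∈ s n, ∑ q ∈ s n, w n p * w n q * d p q
        = ∑' pq : ℕ × ℕ, w n pq.1 * w n pq.2 * d pq.1 pq.2 := by
      rw [tsum_eq_sum (s := (s n) ×ˢ (s n)) (fun pq hpq => by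
        by_cases hp : pq.1 ∈ s n
        · have hq : pq.2 ∉ s n := fun hq => hpq (Finset.mem_product.2 ⟨hp, hq⟩)
          rw [hws n _ hq]; ring
        · rw [hws n _ hp]; ring)]
      rw [Finset.sum_product]
    rw [hfin, ← Summable.tsum_sub hwws hbbd]
    -- bound the tsum
    have hterm : ∀ pq : ℕ × ℕ,
        |w n pq.1 * w n pq.2 * d pq.1 pq.2 - b pq.1 * b pq.2 * d pq.1 pq.2|
        ≤ D * (|w n pq.1 - b pq.1| * w n pq.2 + b pq.1 * |w n pq.2 - b pq.2|) := by
      intro pq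
      have : w n pq.1 * w n pq.2 * d pq.1 pq.2 - b pq.1 * b pq.2 * d pq.1 pq.2
          = (w n pq.1 * w n pq.2 - b pq.1 * b pq.2) * d pq.1 pq.2 := by ring
      rw [this, abs_mul]
      have h2 : |w n pq.1 * w n pq.2 - b pq.1 * b pq.2|
          ≤ |w n pq.1 - b pq.1| * w n pq.2 + b pq.1 * |w n pq.2 - b pq.2| := by
        have : w n pq.1 * w n pq.2 - b pq.1 * b pq.2
            = (w n pq.1 - b pq.1) * w n pq.2 + b pq.1 * (w n pq.2 - b pq.2) := by ring
        rw [this]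
        refine le_trans (abs_add_le _ _) ?_
        rw [abs_mul, abs_mul, abs_of_nonneg (hw0 n _), abs_of_nonneg (hb0 _)]
      calc |w n pq.1 * w n pq.2 - b pq.1 * b pq.2| * |d pq.1 pq.2|
          ≤ (|w n pq.1 - b pq.1| * w n pq.2 + b pq.1 * |w n pq.2 - b pq.2|) * D := by
            exact mul_le_mul h2 (hd _ _) (abs_nonneg _)
              (add_nonneg (mul_nonneg (abs_nonneg _) (hw0 _ _))
                (mul_nonneg (hb0 _) (abs_nonneg _)))
        _ = _ := by ring
    -- summability of the dominating function
    have hs1 : Summable (fun pq : ℕ × ℕ => |w n pq.1 - b pq.1| * w n pq.2) := by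
      apply summable_mul_of_summable_norm (f := fun p => |w n p - b p|) (g := w n)
      · simpa [Real.norm_eq_abs, abs_abs] using habs_sum n
      · simpa [Real.norm_eq_abs] using (hwsum n).abs
    have hs2 : Summable (fun pq : ℕ × ℕ => b pq.1 * |w n pq.2 - b pq.2|) := by
      apply summable_mul_of_summable_norm (f := b) (g := fun q => |w n q - b q|)
      · simpa [Real.norm_eq_abs] using hbs.abs
      · simpa [Real.norm_eq_abs, abs_abs] using habs_sum n
    have hts1 : ∑' pq : ℕ × ℕ, |w n pq.1 - b pq.1| * w n pq.2 = Dn n * 1 := by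
      have hmul : (∑' p, |w n p - b p|) * (∑' q, w n q)
          = ∑' pq : ℕ × ℕ, |w n pq.1 - b pq.1| * w n pq.2 :=
        tsum_mul_tsum_of_summable_norm
          (by simpa [Real.norm_eq_abs, abs_abs] using habs_sum n)
          (by simpa [Real.norm_eq_abs] using (hwsum n).abs)
      rw [← hmul, hwtsum n, h1, hDn]
    have hts2 : ∑' pq : ℕ × ℕ, b pq.1 * |w n pq.2 - b pq.2| = 1 * Dn n := by
      have hmul : (∑' p, b p) * (∑' q, |w n q - b q|)
          = ∑' pq : ℕ × ℕ, b pq.1 * |w n pq.2 - b pq.2| :=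
        tsum_mul_tsum_of_summable_norm
          (by simpa [Real.norm_eq_abs] using hbs.abs)
          (by simpa [Real.norm_eq_abs, abs_abs] using habs_sum n)
      rw [← hmul, hb1, hDn]
    calc |∑' pq : ℕ × ℕ, (w n pq.1 * w n pq.2 * d pq.1 pq.2 - b pq.1 * b pq.2 * d pq.1 pq.2)|
        ≤ ∑' pq : ℕ × ℕ, |w n pq.1 * w n pq.2 * d pq.1 pq.2 - b pq.1 * b pq.2 * d pq.1 pq.2| := by
          simpa [Real.norm_eq_abs] using
            norm_tsum_le_tsum_norm (f := fun pq : ℕ × ℕ =>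
              w n pq.1 * w n pq.2 * d pq.1 pq.2 - b pq.1 * b pq.2 * d pq.1 pq.2)
              (by simpa [Real.norm_eq_abs] using (hwws.sub hbbd).abs)
      _ ≤ ∑' pq : ℕ × ℕ, D * (|w n pq.1 - b pq.1| * w n pq.2 + b pq.1 * |w n pq.2 - b pq.2|) := by
          refine Summable.tsum_le_tsum hterm ((hwws.sub hbbd).abs) (((hs1.add hs2)).mul_left D)
      _ = D * ((Dn n * 1) + (1 * Dn n)) := by
          rw [tsum_mul_left, Summable.tsum_add hs1 hs2, hts1, hts2]
      _ = D * (2 * Dn n) := by ring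
  -- conclude
  have hlim : Tendsto (fun n => D * (2 * Dn n)) atTop (nhds 0) := by
    simpa using (hDn0.const_mul (D * 2)).congr (fun n => by ring)
  rw [← tendsto_sub_nhds_zero_iff]
  refine squeeze_zero_norm' ?_ hlim
  filter_upwards [keyineq] with n h
  simpa [Real.norm_eq_abs] using h

end Scheffe

section Group

lemma group_sum (P : ℕ → ℕ) (n : ℕ) (H : ℕ → ℝ) :
    ∑ i ∈ Finset.range n, H (P i) =
      ∑ p ∈ (Finset.range n).image P,
        (((Finset.range n).filter (fun i => P i = p)).card : ℝ) * H p := by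
  classical
  rw [← Finset.sum_fiberwise_of_maps_to (fun i hi => Finset.mem_image_of_mem P hi)
    (fun i => H (P i))]
  refine Finset.sum_congr rfl fun p hp => ?_
  rw [Finset.sum_congr rfl (fun i hi => by rw [(Finset.mem_filter.1 hi).2] : ∀ i ∈ (Finset.range n).filter (fun i => P i = p), H (P i) = H p),
    Finset.sum_const, nsmul_eq_mul]

end Group


set_option maxHeartbeats 4000000 in
/-- Let `(M̄, T̄, μ̄)` be a probability-preserving ergodic dynamical system and
`(A_m)` a sequence of essential partitions (countable collections of measurable
sets, pairwise intersecting in measure zero, whose union has full measure).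
If `F` is bounded measurable and
`∑_{A,B ∈ A_m} μ̄(A) μ̄(B) (sup_{A×B} F − inf_{A×B} F) → 0`,
then for a.e. `x`, `(1/n²) ∑_{0≤i,j≤n−1} F(T̄^i x, T̄^j x) → ∫∫ F dμ̄ dμ̄`. -/
theorem stmt1 {Ω : Type*} [MeasurableSpace Ω] (μ : Measure Ω) [IsProbabilityMeasure μ]
    (T : Ω → Ω) (hT : Ergodic T μ)
    (A : ℕ → ℕ → Set Ω)
    (hAmeas : ∀ m i, MeasurableSet (A m i))
    (hAdisj : ∀ m i j, i ≠ j → μ (A m i ∩ A m j) = 0)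
    (hAfull : ∀ m, μ (⋃ i, A m i) = 1)
    (F : Ω × Ω → ℝ) (hFmeas : Measurable F)
    (Cb : ℝ) (hFb : ∀ p, |F p| ≤ Cb)
    (hcond : Tendsto (fun m => ∑' ij : ℕ × ℕ,
        (μ (A m ij.1)).toReal * (μ (A m ij.2)).toReal *
          (sSup (F '' (A m ij.1 ×ˢ A m ij.2)) - sInf (F '' (A m ij.1 ×ˢ A m ij.2))))
      atTop (nhds 0)) :
    ∀ᵐ x ∂μ, Tendsto (fun n : ℕ =>
        (1 : ℝ) / (n : ℝ) ^ 2 *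
          ∑ i ∈ Finset.range n, ∑ j ∈ Finset.range n, F (T^[i] x, T^[j] x))
      atTop (nhds (∫ p, F p ∂(μ.prod μ))) := by
  classical
  have hTm : Measurable T := hT.toMeasurePreserving.measurable
  have hne : Nonempty Ω := Measure.nonempty_of_neZero μ
  have hne2 : Nonempty (Ω × Ω) := inferInstance
  have hCb0 : 0 ≤ Cb := le_trans (abs_nonneg _) (hFb (Classical.arbitrary _))
  -- disjointified partitions
  set B : ℕ → ℕ → Set Ω := fun m p => A m p \ ⋃ k, ⋃ (_ : k < p), A m k with hBdef
  have hBmeas : ∀ m p, MeasurableSet (B m p) := fun m p =>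
    (hAmeas m p).diff (MeasurableSet.iUnion fun k => MeasurableSet.iUnion fun _ => hAmeas m k)
  have hBsub : ∀ m p, B m p ⊆ A m p := fun m p => Set.diff_subset
  have hBdisj : ∀ m p q, p ≠ q → Disjoint (B m p) (B m q) := by
    intro m p q hpq
    rw [Set.disjoint_left]
    intro x hxp hxq
    rcases Nat.lt_or_ge p q with h | h
    · exact hxq.2 (Set.mem_iUnion.2 ⟨p, Set.mem_iUnion.2 ⟨h, hxp.1⟩⟩)
    · have h' : q < p := lt_of_le_of_ne h (Ne.symm hpq)
      exact hxp.2 (Set.mem_iUnion.2 ⟨q, Set.mem_iUnion.2 ⟨h', hxq.1⟩⟩)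
  have hBunion : ∀ m, (⋃ p, B m p) = ⋃ p, A m p := by
    intro m
    refine Set.Subset.antisymm (Set.iUnion_mono fun p => hBsub m p) ?_
    intro x hx
    rw [Set.mem_iUnion] at hx
    have hex : ∃ p, x ∈ A m p := hx
    refine Set.mem_iUnion.2 ⟨Nat.find hex, Nat.find_spec hex, ?_⟩
    intro hmem
    rw [Set.mem_iUnion] at hmem
    obtain ⟨k, hk⟩ := hmem
    rw [Set.mem_iUnion] at hk
    obtain ⟨hklt, hxk⟩ := hk
    exact (Nat.find_min hex hklt) hxk
  have hBμ : ∀ m p, μ (B m p) = μ (A m p) := by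
    intro m p
    have hnull : μ (A m p ∩ ⋃ k, ⋃ (_ : k < p), A m k) = 0 := by
      have hsub : A m p ∩ (⋃ k, ⋃ (_ : k < p), A m k) ⊆ ⋃ k, ⋃ (_ : k < p), (A m p ∩ A m k) := by
        rintro x ⟨hx1, hx2⟩
        rw [Set.mem_iUnion] at hx2
        obtain ⟨k, hk⟩ := hx2
        rw [Set.mem_iUnion] at hk
        obtain ⟨hklt, hxk⟩ := hk
        exact Set.mem_iUnion.2 ⟨k, Set.mem_iUnion.2 ⟨hklt, hx1, hxk⟩⟩
      refine measure_mono_null hsub ?_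
      refine measure_iUnion_null fun k => measure_iUnion_null fun hk => hAdisj m p k (by omega)
    calc μ (B m p) = μ (A m p \ (A m p ∩ ⋃ k, ⋃ (_ : k < p), A m k)) := by
          rw [Set.diff_self_inter]
      _ = μ (A m p) := measure_diff_null hnull
  have hBfull : ∀ m, μ (⋃ p, B m p) = 1 := fun m => by rw [hBunion m]; exact hAfull m
  -- real measures
  set μr : ℕ → ℕ → ℝ := fun m p => (μ (A m p)).toReal with hμrdef
  have hμr0 : ∀ m p, 0 ≤ μr m p := fun m p => ENNReal.toReal_nonneg
  have hBr : ∀ m p, (μ (B m p)).toReal = μr m p := fun m p => by rw [hBμ]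
  have hμB1 : ∀ m, ∑' p, μ (B m p) = 1 := fun m => by
    rw [← measure_iUnion (fun p q hpq => hBdisj m p q hpq) (fun p => hBmeas m p)]
    exact hBfull m
  have hμrsum : ∀ m, Summable (μr m) := by
    intro m
    have h1 := ENNReal.summable_toReal (by rw [hμB1 m]; exact ENNReal.one_ne_top)
    have h2 : (fun p => (μ (B m p)).toReal) = μr m := funext fun p => hBr m p
    rwa [h2] at h1
  have hμrtsum : ∀ m, ∑' p, μr m p = 1 := by
    intro m
    have h2 : ∑' p, μr m p = ∑' p, (μ (B m p)).toReal :=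
      tsum_congr fun p => (hBr m p).symm
    rw [h2, ← ENNReal.tsum_toReal_eq (fun p => measure_ne_top μ _), hμB1 m, ENNReal.toReal_one]
  -- inf/sup over rectangles
  set c : ℕ → ℕ → ℕ → ℝ := fun m p q => sInf (F '' (A m p ×ˢ A m q)) with hcdef
  set o : ℕ → ℕ → ℕ → ℝ := fun m p q =>
    sSup (F '' (A m p ×ˢ A m q)) - sInf (F '' (A m p ×ˢ A m q)) with hodef
  have hbddA : ∀ m p q, BddAbove (F '' (A m p ×ˢ A m q)) := by
    intro m p q
    refine ⟨Cb, ?_⟩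
    rintro y ⟨z, _, rfl⟩
    exact (abs_le.1 (hFb z)).2
  have hbddB : ∀ m p q, BddBelow (F '' (A m p ×ˢ A m q)) := by
    intro m p q
    refine ⟨-Cb, ?_⟩
    rintro y ⟨z, _, rfl⟩
    exact (abs_le.1 (hFb z)).1
  have hco : ∀ m p q (u v : Ω), u ∈ A m p → v ∈ A m q →
      c m p q ≤ F (u, v) ∧ F (u, v) ≤ c m p q + o m p q := by
    intro m p q u v hu hv
    have hmem : F (u, v) ∈ F '' (A m p ×ˢ A m q) := ⟨(u, v), ⟨hu, hv⟩, rfl⟩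
    constructor
    · exact csInf_le (hbddB m p q) hmem
    · have h1 : F (u, v) ≤ sSup (F '' (A m p ×ˢ A m q)) := le_csSup (hbddA m p q) hmem
      have h2 : c m p q + o m p q = sSup (F '' (A m p ×ˢ A m q)) := by
        rw [hcdef, hodef]; ring
      linarith
  have ho0 : ∀ m p q, 0 ≤ o m p q := by
    intro m p q
    rcases Set.eq_empty_or_nonempty (F '' (A m p ×ˢ A m q)) with h | h
    · rw [hodef]; simp only [h, Real.sSup_empty, Real.sInf_empty, sub_zero]; exact le_refl 0
    · rw [hodef]
      simp only [sub_nonneg]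
      exact csInf_le_csSup h (hbddB m p q) (hbddA m p q)
  have hoB : ∀ m p q, |o m p q| ≤ 2 * Cb := by
    intro m p q
    rw [abs_of_nonneg (ho0 m p q)]
    rcases Set.eq_empty_or_nonempty (F '' (A m p ×ˢ A m q)) with h | h
    · rw [hodef]; simp only [h, Real.sSup_empty, Real.sInf_empty, sub_zero]; linarith
    · have h1 : sSup (F '' (A m p ×ˢ A m q)) ≤ Cb := by
        refine csSup_le h ?_
        rintro y ⟨z, _, rfl⟩
        exact (abs_le.1 (hFb z)).2
      have h2 : -Cb ≤ sInf (F '' (A m p ×ˢ A m q)) := by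
        refine le_csInf h ?_
        rintro y ⟨z, _, rfl⟩
        exact (abs_le.1 (hFb z)).1
      simp only [hodef]; linarith
  have hcB : ∀ m p q, |c m p q| ≤ Cb := by
    intro m p q
    rcases Set.eq_empty_or_nonempty (F '' (A m p ×ˢ A m q)) with h | h
    · rw [hcdef]; simp only [h, Real.sInf_empty, abs_zero]; exact hCb0
    · rw [abs_le]
      constructor
      · refine le_csInf h ?_
        rintro y ⟨z, _, rfl⟩
        exact (abs_le.1 (hFb z)).1
      · obtain ⟨y, hy⟩ := h
        refine csInf_le_of_le (hbddB m p q) hy ?_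
        obtain ⟨z, _, rfl⟩ := hy
        exact (abs_le.1 (hFb z)).2
  -- summability of pair products
  have hμμ : ∀ m, Summable (fun pq : ℕ × ℕ => μr m pq.1 * μr m pq.2) := by
    intro m
    apply summable_mul_of_summable_norm (f := μr m) (g := μr m) <;>
      · simpa [Real.norm_eq_abs] using (hμrsum m).abs
  have hμμ0 : ∀ m (pq : ℕ × ℕ), 0 ≤ μr m pq.1 * μr m pq.2 := fun m pq =>
    mul_nonneg (hμr0 m _) (hμr0 m _)
  have hsum_c : ∀ m, Summable (fun pq : ℕ × ℕ => μr m pq.1 * μr m pq.2 * c m pq.1 pq.2) := by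
    intro m
    refine Summable.of_abs (Summable.of_nonneg_of_le (fun pq => abs_nonneg _) (fun pq => ?_)
      ((hμμ m).mul_left Cb))
    rw [abs_mul, abs_of_nonneg (hμμ0 m pq)]
    calc μr m pq.1 * μr m pq.2 * |c m pq.1 pq.2| ≤ μr m pq.1 * μr m pq.2 * Cb :=
          mul_le_mul_of_nonneg_left (hcB m _ _) (hμμ0 m pq)
      _ = Cb * (μr m pq.1 * μr m pq.2) := by ring
  have hsum_o : ∀ m, Summable (fun pq : ℕ × ℕ => μr m pq.1 * μr m pq.2 * o m pq.1 pq.2) := by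
    intro m
    refine Summable.of_abs (Summable.of_nonneg_of_le (fun pq => abs_nonneg _) (fun pq => ?_)
      ((hμμ m).mul_left (2 * Cb)))
    rw [abs_mul, abs_of_nonneg (hμμ0 m pq)]
    calc μr m pq.1 * μr m pq.2 * |o m pq.1 pq.2| ≤ μr m pq.1 * μr m pq.2 * (2 * Cb) :=
          mul_le_mul_of_nonneg_left (hoB m _ _) (hμμ0 m pq)
      _ = (2 * Cb) * (μr m pq.1 * μr m pq.2) := by ring
  -- integrability of F
  have hFi : Integrable F (μ.prod μ) :=
    (integrable_const Cb).mono' hFmeas.aestronglyMeasurable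
      (Filter.Eventually.of_forall fun p => by simpa using hFb p)
  -- K3 : the integral is within tsum-osc of the tsum of c
  have hK3 : ∀ m, |(∑' pq : ℕ × ℕ, μr m pq.1 * μr m pq.2 * c m pq.1 pq.2)
      - ∫ z, F z ∂(μ.prod μ)|
      ≤ ∑' pq : ℕ × ℕ, μr m pq.1 * μr m pq.2 * o m pq.1 pq.2 := by
    intro m
    set R : ℕ × ℕ → Set (Ω × Ω) := fun pq => B m pq.1 ×ˢ B m pq.2 with hRdef
    have hRmeas : ∀ pq, MeasurableSet (R pq) := fun pq =>
      (hBmeas m pq.1).prod (hBmeas m pq.2)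
    have hRdisj : Pairwise (Function.onFun Disjoint R) := by
      intro pq pq' hne'
      have hor : pq.1 ≠ pq'.1 ∨ pq.2 ≠ pq'.2 := by
        by_contra h
        push_neg at h
        exact hne' (Prod.ext h.1 h.2)
      rw [Function.onFun, Set.disjoint_left]
      rintro ⟨u, v⟩ ⟨hu, hv⟩ ⟨hu', hv'⟩
      rcases hor with h | h
      · exact Set.disjoint_left.1 (hBdisj m _ _ h) hu hu'
      · exact Set.disjoint_left.1 (hBdisj m _ _ h) hv hv'
    have hRunion : (⋃ pq, R pq) = (⋃ p, B m p) ×ˢ (⋃ p, B m p) := by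
      ext z
      simp only [Set.mem_iUnion, hRdef, Set.mem_prod, Prod.exists]
      constructor
      · rintro ⟨p, q, hp, hq⟩; exact ⟨⟨p, hp⟩, ⟨q, hq⟩⟩
      · rintro ⟨⟨p, hp⟩, ⟨q, hq⟩⟩; exact ⟨p, q, hp, hq⟩
    have hU : MeasurableSet (⋃ p, B m p) := MeasurableSet.iUnion (hBmeas m)
    have hμU : μ ((⋃ p, B m p)ᶜ) = 0 := by
      rw [measure_compl hU (measure_ne_top μ _), hBfull m, measure_univ]
      simp
    have hcompl : (μ.prod μ) ((⋃ pq, R pq)ᶜ) = 0 := by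
      rw [hRunion]
      have hsub : ((⋃ p, B m p) ×ˢ (⋃ p, B m p))ᶜ ⊆
          (((⋃ p, B m p)ᶜ) ×ˢ (Set.univ : Set Ω)) ∪
            ((Set.univ : Set Ω) ×ˢ ((⋃ p, B m p)ᶜ)) := by
        rintro ⟨u, v⟩ hz
        simp only [Set.mem_compl_iff, Set.mem_prod, not_and_or] at hz
        simp only [Set.mem_union, Set.mem_prod, Set.mem_univ, Set.mem_compl_iff, and_true,
          true_and]
        tauto
      refine measure_mono_null hsub (measure_union_null ?_ ?_)
      · rw [Measure.prod_prod, hμU]; simp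
      · rw [Measure.prod_prod, hμU]; simp
    have hmemae : ∀ᵐ z ∂(μ.prod μ), z ∈ ⋃ pq, R pq := by
      rw [ae_iff]
      exact hcompl
    have hIdec : ∫ z, F z ∂(μ.prod μ) = ∑' pq, ∫ z in R pq, F z ∂(μ.prod μ) := by
      rw [← integral_iUnion hRmeas hRdisj hFi.integrableOn,
        Measure.restrict_eq_self_of_ae_mem hmemae]
    have hRvol : ∀ pq : ℕ × ℕ, ((μ.prod μ) (R pq)).toReal = μr m pq.1 * μr m pq.2 := by
      intro pq
      rw [hRdef]
      simp only []
      rw [Measure.prod_prod, ENNReal.toReal_mul, hBr, hBr]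
    have hterm : ∀ pq : ℕ × ℕ,
        |μr m pq.1 * μr m pq.2 * c m pq.1 pq.2 - ∫ z in R pq, F z ∂(μ.prod μ)|
        ≤ μr m pq.1 * μr m pq.2 * o m pq.1 pq.2 := by
      intro pq
      rcases eq_or_ne ((μ.prod μ) (R pq)) 0 with h0 | h0
      · have hz : μr m pq.1 * μr m pq.2 = 0 := by rw [← hRvol pq, h0, ENNReal.toReal_zero]
        rw [Measure.restrict_eq_zero.2 h0, integral_zero_measure, hz]
        simp
      · have hRne : (R pq).Nonempty := nonempty_of_measure_ne_zero h0
        have hbounds : ∀ z ∈ R pq, c m pq.1 pq.2 ≤ F z ∧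
            F z ≤ c m pq.1 pq.2 + o m pq.1 pq.2 := by
          rintro ⟨u, v⟩ ⟨hu, hv⟩
          exact hco m pq.1 pq.2 u v (hBsub m _ hu) (hBsub m _ hv)
        have hconst_int : IntegrableOn (fun _ : Ω × Ω => c m pq.1 pq.2) (R pq) (μ.prod μ) :=
          integrableOn_const (measure_ne_top _ _)
        have hconst_int2 : IntegrableOn (fun _ : Ω × Ω => c m pq.1 pq.2 + o m pq.1 pq.2)
            (R pq) (μ.prod μ) := integrableOn_const (measure_ne_top _ _)
        have hlow : c m pq.1 pq.2 * ((μ.prod μ) (R pq)).toReal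
            ≤ ∫ z in R pq, F z ∂(μ.prod μ) := by
          have h := setIntegral_mono_on hconst_int hFi.integrableOn (hRmeas pq)
            (fun z hz => (hbounds z hz).1)
          rwa [setIntegral_const, smul_eq_mul, mul_comm] at h
        have hup : ∫ z in R pq, F z ∂(μ.prod μ)
            ≤ (c m pq.1 pq.2 + o m pq.1 pq.2) * ((μ.prod μ) (R pq)).toReal := by
          have h := setIntegral_mono_on hFi.integrableOn hconst_int2 (hRmeas pq)
            (fun z hz => (hbounds z hz).2)
          rwa [setIntegral_const, smul_eq_mul, mul_comm] at h
        rw [← hRvol pq]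
        have hmR : 0 ≤ ((μ.prod μ) (R pq)).toReal := ENNReal.toReal_nonneg
        have homR : 0 ≤ o m pq.1 pq.2 * ((μ.prod μ) (R pq)).toReal :=
          mul_nonneg (ho0 m _ _) hmR
        rw [abs_le]
        constructor
        · have : (c m pq.1 pq.2 + o m pq.1 pq.2) * ((μ.prod μ) (R pq)).toReal
              = c m pq.1 pq.2 * ((μ.prod μ) (R pq)).toReal
                + o m pq.1 pq.2 * ((μ.prod μ) (R pq)).toReal := by ring
          rw [this] at hup
          have h2 : ((μ.prod μ) (R pq)).toReal * o m pq.1 pq.2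
              = o m pq.1 pq.2 * ((μ.prod μ) (R pq)).toReal := by ring
          rw [h2]
          linarith
        · have h2 : ((μ.prod μ) (R pq)).toReal * o m pq.1 pq.2
              = o m pq.1 pq.2 * ((μ.prod μ) (R pq)).toReal := by ring
          rw [h2]
          linarith
    have hsum_int : Summable (fun pq : ℕ × ℕ => ∫ z in R pq, F z ∂(μ.prod μ)) := by
      refine Summable.of_abs (Summable.of_nonneg_of_le (fun pq => abs_nonneg _) (fun pq => ?_)
        ((hμμ m).mul_left (3 * Cb)))
      have h1 := hterm pq
      have h2 : |μr m pq.1 * μr m pq.2 * c m pq.1 pq.2| ≤ Cb * (μr m pq.1 * μr m pq.2) := by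
        rw [abs_mul, abs_of_nonneg (hμμ0 m pq)]
        calc μr m pq.1 * μr m pq.2 * |c m pq.1 pq.2| ≤ μr m pq.1 * μr m pq.2 * Cb :=
              mul_le_mul_of_nonneg_left (hcB m _ _) (hμμ0 m pq)
          _ = Cb * (μr m pq.1 * μr m pq.2) := by ring
      have h3 : μr m pq.1 * μr m pq.2 * o m pq.1 pq.2 ≤ 2 * Cb * (μr m pq.1 * μr m pq.2) := by
        calc μr m pq.1 * μr m pq.2 * o m pq.1 pq.2
            ≤ μr m pq.1 * μr m pq.2 * (2 * Cb) := by
              refine mul_le_mul_of_nonneg_left ?_ (hμμ0 m pq)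
              have := hoB m pq.1 pq.2
              rw [abs_of_nonneg (ho0 m _ _)] at this
              exact this
          _ = 2 * Cb * (μr m pq.1 * μr m pq.2) := by ring
      calc |∫ z in R pq, F z ∂(μ.prod μ)|
          ≤ |μr m pq.1 * μr m pq.2 * c m pq.1 pq.2 - ∫ z in R pq, F z ∂(μ.prod μ)|
            + |μr m pq.1 * μr m pq.2 * c m pq.1 pq.2| := by
            have := abs_sub_abs_le_abs_sub (μr m pq.1 * μr m pq.2 * c m pq.1 pq.2)
              (∫ z in R pq, F z ∂(μ.prod μ))
            have h4 := abs_sub (μr m pq.1 * μr m pq.2 * c m pq.1 pq.2)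
              (∫ z in R pq, F z ∂(μ.prod μ))
            calc |∫ z in R pq, F z ∂(μ.prod μ)|
                = |(μr m pq.1 * μr m pq.2 * c m pq.1 pq.2)
                  - (μr m pq.1 * μr m pq.2 * c m pq.1 pq.2 - ∫ z in R pq, F z ∂(μ.prod μ))| := by
                  congr 1; ring
              _ ≤ |μr m pq.1 * μr m pq.2 * c m pq.1 pq.2|
                  + |μr m pq.1 * μr m pq.2 * c m pq.1 pq.2 - ∫ z in R pq, F z ∂(μ.prod μ)| :=
                  abs_sub _ _
              _ = _ := by ring
        _ ≤ 3 * Cb * (μr m pq.1 * μr m pq.2) := by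
            have := le_trans h1 h3
            linarith
    rw [hIdec, ← Summable.tsum_sub (hsum_c m) hsum_int]
    calc |∑' pq : ℕ × ℕ, (μr m pq.1 * μr m pq.2 * c m pq.1 pq.2
          - ∫ z in R pq, F z ∂(μ.prod μ))|
        ≤ ∑' pq : ℕ × ℕ, |μr m pq.1 * μr m pq.2 * c m pq.1 pq.2
          - ∫ z in R pq, F z ∂(μ.prod μ)| := by
          simpa [Real.norm_eq_abs] using norm_tsum_le_tsum_norm
            (f := fun pq : ℕ × ℕ => μr m pq.1 * μr m pq.2 * c m pq.1 pq.2
              - ∫ z in R pq, F z ∂(μ.prod μ))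
            (by simpa [Real.norm_eq_abs] using ((hsum_c m).sub hsum_int).abs)
      _ ≤ ∑' pq : ℕ × ℕ, μr m pq.1 * μr m pq.2 * o m pq.1 pq.2 :=
          Summable.tsum_le_tsum hterm (((hsum_c m).sub hsum_int).abs) (hsum_o m)
  -- Birkhoff for indicators, a.e.
  have hbirk : ∀ᵐ x ∂μ, ∀ m p, Tendsto
      (fun n => bavg T ((B m p).indicator (fun _ => (1:ℝ))) n x) atTop (nhds (μr m p)) := by
    rw [ae_all_iff]
    intro m
    rw [ae_all_iff]
    intro p
    have hind : Measurable ((B m p).indicator (fun _ => (1:ℝ))) :=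
      measurable_const.indicator (hBmeas m p)
    have habs : ∀ y, |(B m p).indicator (fun _ => (1:ℝ)) y| ≤ 1 := by
      intro y
      rw [Set.indicator_apply]
      split <;> simp
    have hintegral : ∫ y, (B m p).indicator (fun _ => (1:ℝ)) y ∂μ = μr m p := by
      rw [integral_indicator_const (1:ℝ) (hBmeas m p), smul_eq_mul, mul_one, measureReal_def, hBr]
    have h := birkhoff_bdd hT _ hind 1 habs
    rw [hintegral] at h
    exact h
  -- orbit goodness, a.e.
  have horb : ∀ᵐ x ∂μ, ∀ m k, T^[k] x ∈ ⋃ p, B m p := by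
    rw [ae_all_iff]
    intro m
    rw [ae_all_iff]
    intro k
    have hU : MeasurableSet (⋃ p, B m p) := MeasurableSet.iUnion (hBmeas m)
    have hμU : μ ((⋃ p, B m p)ᶜ) = 0 := by
      rw [measure_compl hU (measure_ne_top μ _), hBfull m, measure_univ]
      simp
    have hpre : μ (T^[k] ⁻¹' ((⋃ p, B m p)ᶜ)) = 0 := by
      rw [(hT.toMeasurePreserving.iterate k).measure_preimage
        hU.compl.nullMeasurableSet]
      exact hμU
    rw [ae_iff]
    exact hpre
  -- hcond in terms of μr and o
  have hcond' : Tendsto (fun m => ∑' pq : ℕ × ℕ,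
      μr m pq.1 * μr m pq.2 * o m pq.1 pq.2) atTop (nhds 0) := hcond
  -- main a.e. statement
  filter_upwards [hbirk, horb] with x hx1 hx2
  rw [Metric.tendsto_atTop]
  intro δ hδ
  obtain ⟨m, hm⟩ : ∃ m, ∑' pq : ℕ × ℕ, μr m pq.1 * μr m pq.2 * o m pq.1 pq.2 < δ/4 :=
    (hcond'.eventually_lt_const (by positivity)).exists
  -- index map
  set P : ℕ → ℕ := fun k => Classical.choose (Set.mem_iUnion.1 (hx2 m k)) with hPdef
  have hP : ∀ k, T^[k] x ∈ B m (P k) := fun k =>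
    Classical.choose_spec (Set.mem_iUnion.1 (hx2 m k))
  have hPu : ∀ k p, T^[k] x ∈ B m p → P k = p := by
    intro k p hmem
    by_contra hne'
    exact Set.disjoint_left.1 (hBdisj m _ _ hne') (hP k) hmem
  set sfin : ℕ → Finset ℕ := fun n => (Finset.range n).image P with hsdef
  set cnt : ℕ → ℕ → ℕ := fun n p => ((Finset.range n).filter (fun i => P i = p)).card
    with hcntdef
  set w : ℕ → ℕ → ℝ := fun n p => (n:ℝ)⁻¹ * cnt n p with hwdef
  have hw0 : ∀ n p, 0 ≤ w n p := fun n p => mul_nonneg (by positivity) (Nat.cast_nonneg _)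
  have hws : ∀ n p, p ∉ sfin n → w n p = 0 := by
    intro n p hp
    have : cnt n p = 0 := by
      rw [hcntdef]
      simp only [Finset.card_eq_zero]
      rw [Finset.filter_eq_empty_iff]
      intro i hi hPi
      exact hp (Finset.mem_image.2 ⟨i, hi, hPi⟩)
    rw [hwdef]
    simp only [this, Nat.cast_zero, mul_zero]
  have hw_eq : ∀ n p, w n p = bavg T ((B m p).indicator (fun _ => (1:ℝ))) n x := by
    intro n p
    have hind : ∀ k, (B m p).indicator (fun _ => (1:ℝ)) (T^[k] x)
        = if P k = p then 1 else 0 := by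
      intro k
      rw [Set.indicator_apply]
      by_cases h : T^[k] x ∈ B m p
      · rw [if_pos h, if_pos (hPu k p h)]
      · have hne3 : ¬ P k = p := fun hPk => h (by rw [← hPk]; exact hP k)
        rw [if_neg h, if_neg hne3]
    show w n p = (n:ℝ)⁻¹ * ∑ k ∈ Finset.range n, ((B m p).indicator (fun _ => (1:ℝ)) (T^[k] x))
    rw [Finset.sum_congr rfl (fun k _ => hind k), Finset.sum_boole]
  have hconv : ∀ p, Tendsto (fun n => w n p) atTop (nhds (μr m p)) := fun p =>
    (hx1 m p).congr (fun n => (hw_eq n p).symm)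
  have hw1 : ∀ᶠ n in atTop, ∑ p ∈ sfin n, w n p = 1 := by
    filter_upwards [eventually_ge_atTop 1] with n hn
    have hcard : ∑ p ∈ sfin n, cnt n p = n := by
      rw [hsdef, hcntdef]
      exact ((Finset.card_eq_sum_card_image P (Finset.range n)).symm).trans (Finset.card_range n)
    have hn0 : (n:ℝ) ≠ 0 := by
      have : 0 < n := hn
      positivity
    calc ∑ p ∈ sfin n, w n p = (n:ℝ)⁻¹ * ∑ p ∈ sfin n, (cnt n p : ℝ) := by
          rw [hwdef, Finset.mul_sum]
      _ = (n:ℝ)⁻¹ * (n:ℝ) := by rw [← Nat.cast_sum, hcard]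
      _ = 1 := inv_mul_cancel₀ hn0
  -- scheffe applications
  have htc := scheffe_pair (w := w) (s := sfin) (b := μr m) (d := c m) (D := Cb)
    hw0 hws hw1 (hμr0 m) (hμrsum m) (hμrtsum m) hconv (hcB m)
  have hto := scheffe_pair (w := w) (s := sfin) (b := μr m) (d := o m) (D := 2 * Cb)
    hw0 hws hw1 (hμr0 m) (hμrsum m) (hμrtsum m) hconv (hoB m)
  -- grouping identity
  have hgroup : ∀ (G : ℕ → ℕ → ℝ) (n : ℕ),
      (1:ℝ)/(n:ℝ)^2 * ∑ i ∈ Finset.range n, ∑ j ∈ Finset.range n, G (P i) (P j)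
      = ∑ p ∈ sfin n, ∑ q ∈ sfin n, w n p * w n q * G p q := by
    intro G n
    have h1 : ∑ i ∈ Finset.range n, ∑ j ∈ Finset.range n, G (P i) (P j)
        = ∑ i ∈ Finset.range n, ∑ q ∈ sfin n, (cnt n q : ℝ) * G (P i) q :=
      Finset.sum_congr rfl fun i _ => group_sum P n (fun q => G (P i) q)
    have h2 : ∑ i ∈ Finset.range n, ∑ q ∈ sfin n, (cnt n q : ℝ) * G (P i) q
        = ∑ q ∈ sfin n, (cnt n q : ℝ) * ∑ p ∈ sfin n, (cnt n p : ℝ) * G p q := by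
      rw [Finset.sum_comm]
      refine Finset.sum_congr rfl fun q _ => ?_
      rw [← Finset.mul_sum, group_sum P n (fun p => G p q)]
    have h3 : ∑ p ∈ sfin n, ∑ q ∈ sfin n, w n p * w n q * G p q
        = ∑ q ∈ sfin n, ∑ p ∈ sfin n, w n p * w n q * G p q := Finset.sum_comm
    rw [h1, h2, h3, Finset.mul_sum]
    refine Finset.sum_congr rfl fun q _ => ?_
    rw [Finset.mul_sum, Finset.mul_sum]
    refine Finset.sum_congr rfl fun p _ => ?_
    simp only [hwdef]
    rw [show (1:ℝ)/(n:ℝ)^2 = (n:ℝ)⁻¹ * (n:ℝ)⁻¹ by rw [one_div, sq, mul_inv]]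
    ring
  -- K1 : pointwise comparison
  have hK1 : ∀ n : ℕ,
      |(1:ℝ)/(n:ℝ)^2 * ∑ i ∈ Finset.range n, ∑ j ∈ Finset.range n, F (T^[i] x, T^[j] x)
      - (1:ℝ)/(n:ℝ)^2 * ∑ i ∈ Finset.range n, ∑ j ∈ Finset.range n, c m (P i) (P j)|
      ≤ (1:ℝ)/(n:ℝ)^2 * ∑ i ∈ Finset.range n, ∑ j ∈ Finset.range n, o m (P i) (P j) := by
    intro n
    have hfac : (1:ℝ)/(n:ℝ)^2 * ∑ i ∈ Finset.range n, ∑ j ∈ Finset.range n, F (T^[i] x, T^[j] x)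
        - (1:ℝ)/(n:ℝ)^2 * ∑ i ∈ Finset.range n, ∑ j ∈ Finset.range n, c m (P i) (P j)
        = (1:ℝ)/(n:ℝ)^2 * ∑ i ∈ Finset.range n, ∑ j ∈ Finset.range n,
            (F (T^[i] x, T^[j] x) - c m (P i) (P j)) := by
      rw [← mul_sub, ← Finset.sum_sub_distrib]
      congr 1
      exact Finset.sum_congr rfl fun i _ => (Finset.sum_sub_distrib _ _).symm
    rw [hfac, abs_mul, abs_of_nonneg (show (0:ℝ) ≤ 1/(n:ℝ)^2 by positivity)]
    refine mul_le_mul_of_nonneg_left ?_ (by positivity)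
    refine le_trans (Finset.abs_sum_le_sum_abs _ _) ?_
    refine Finset.sum_le_sum fun i _ => ?_
    refine le_trans (Finset.abs_sum_le_sum_abs _ _) ?_
    refine Finset.sum_le_sum fun j _ => ?_
    have hmem1 : T^[i] x ∈ A m (P i) := hBsub m _ (hP i)
    have hmem2 : T^[j] x ∈ A m (P j) := hBsub m _ (hP j)
    have := hco m (P i) (P j) (T^[i] x) (T^[j] x) hmem1 hmem2
    rw [abs_le]
    constructor
    · linarith [ho0 m (P i) (P j), this.1]
    · linarith [this.2]
  -- final assembly
  obtain ⟨N1, hN1⟩ := (Metric.tendsto_atTop.1 htc) (δ/4) (by positivity)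
  obtain ⟨N2, hN2⟩ := (Metric.tendsto_atTop.1 hto) (δ/4) (by positivity)
  refine ⟨max N1 N2, fun n hn => ?_⟩
  have hn1 : n ≥ N1 := le_trans (le_max_left _ _) hn
  have hn2 : n ≥ N2 := le_trans (le_max_right _ _) hn
  have hd1 := hN1 n hn1
  have hd2 := hN2 n hn2
  rw [Real.dist_eq] at hd1 hd2 ⊢
  set Jc := ∑' pq : ℕ × ℕ, μr m pq.1 * μr m pq.2 * c m pq.1 pq.2 with hJc
  set Jo := ∑' pq : ℕ × ℕ, μr m pq.1 * μr m pq.2 * o m pq.1 pq.2 with hJo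
  have hgc := hgroup (c m) n
  have hgo := hgroup (o m) n
  have e1 : |(1:ℝ)/(n:ℝ)^2 * ∑ i ∈ Finset.range n, ∑ j ∈ Finset.range n, F (T^[i] x, T^[j] x)
      - (1:ℝ)/(n:ℝ)^2 * ∑ i ∈ Finset.range n, ∑ j ∈ Finset.range n, c m (P i) (P j)|
      ≤ Jo + δ/4 := by
    refine le_trans (hK1 n) ?_
    rw [hgo]
    have := abs_sub_lt_iff.1 hd2
    linarith [this.1]
  have e2 : |(1:ℝ)/(n:ℝ)^2 * ∑ i ∈ Finset.range n, ∑ j ∈ Finset.range n, c m (P i) (P j)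
      - Jc| < δ/4 := by
    rw [hgc]
    exact hd1
  have t1 : |(1:ℝ)/(n:ℝ)^2 * ∑ i ∈ Finset.range n, ∑ j ∈ Finset.range n, F (T^[i] x, T^[j] x)
      - ∫ p, F p ∂(μ.prod μ)|
      ≤ |(1:ℝ)/(n:ℝ)^2 * ∑ i ∈ Finset.range n, ∑ j ∈ Finset.range n, F (T^[i] x, T^[j] x) - Jc|
        + |Jc - ∫ p, F p ∂(μ.prod μ)| := abs_sub_le _ _ _
  have t2 : |(1:ℝ)/(n:ℝ)^2 * ∑ i ∈ Finset.range n, ∑ j ∈ Finset.range n, F (T^[i] x, T^[j] x)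
      - Jc|
      ≤ |(1:ℝ)/(n:ℝ)^2 * ∑ i ∈ Finset.range n, ∑ j ∈ Finset.range n, F (T^[i] x, T^[j] x)
        - (1:ℝ)/(n:ℝ)^2 * ∑ i ∈ Finset.range n, ∑ j ∈ Finset.range n, c m (P i) (P j)|
        + |(1:ℝ)/(n:ℝ)^2 * ∑ i ∈ Finset.range n, ∑ j ∈ Finset.range n, c m (P i) (P j) - Jc| :=
    abs_sub_le _ _ _
  have h3 := hK3 m
  linarith [e1, e2, hm, t1, t2]
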